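/- Let μ₁ and μ₂ be centered Gaussian measures on ℝ^d with covariance matrices A and B respectively. Then W₂(μ₁, μ₂) ≤ ‖A^{1/2} − B^{1/2}‖_F, where A^{1/2}, B^{1/2} are the positive semidefinite square roots. -/

import Mathlib

open Matrix MeasureTheory ProbabilityTheory

/-- Frobenius norm of a real matrix. -/
noncomputable def frobNorm {d n : ℕ} (A : Matrix (Fin d) (Fin n) ℝ) : ℝ :=
  Real.sqrt (∑ i, ∑ j, (A i j) ^ 2)

/-- Euclidean norm on `ℝ^d`. -/
noncomputable def euclNorm {d : ℕ} (x : Fin d → ℝ) : ℝ := Real.sqrt (∑ i, x i ^ 2)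

/-- `γ` is a coupling of `μ` and `ν`. -/
def IsCoupling {α : Type*} [MeasurableSpace α] (γ : Measure (α × α)) (μ ν : Measure α) : Prop :=
  γ.map Prod.fst = μ ∧ γ.map Prod.snd = ν

/-- 2-Wasserstein distance on `ℝ^d` with Euclidean cost. -/
noncomputable def W2 {d : ℕ} (μ ν : Measure (Fin d → ℝ)) : ℝ :=
  ⨅ γ : {γ : Measure ((Fin d → ℝ) × (Fin d → ℝ)) // IsCoupling γ μ ν},
    Real.sqrt (∫ p, euclNorm (p.1 - p.2) ^ 2 ∂(γ.1))

/-- The positive semidefinite square root of a positive semidefinite matrix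
(Mathlib's former `Matrix.PosSemidef.sqrt`, removed upstream; restated with its old definition). -/
noncomputable def Matrix.PosSemidef.sqrt {n : Type*} [Fintype n] [DecidableEq n]
    {A : Matrix n n ℝ} (hA : A.PosSemidef) : Matrix n n ℝ :=
  hA.1.eigenvectorUnitary.1 * diagonal ((↑) ∘ (Real.sqrt ·) ∘ hA.1.eigenvalues) *
    (star hA.1.eigenvectorUnitary : Matrix n n ℝ)

/-- The centered Gaussian measure on `ℝ^d` with covariance `A`, realized as the
pushforward of the standard Gaussian by `z ↦ A^{1/2} z`. -/
noncomputable def gaussianOf {d : ℕ} (A : Matrix (Fin d) (Fin d) ℝ) (hA : A.PosSemidef) :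
    Measure (Fin d → ℝ) :=
  (Measure.pi fun _ : Fin d => gaussianReal 0 1).map (fun z => hA.sqrt.mulVec z)

open Real
open scoped ENNReal NNReal

noncomputable def stdPdf (x : ℝ) : ℝ := (Real.sqrt (2 * π))⁻¹ * Real.exp (-x ^ 2 / 2)

lemma gaussianPDFReal01 : gaussianPDFReal 0 1 = stdPdf := by
  funext x
  simp [gaussianPDFReal, stdPdf]

lemma stdPdf_nonneg (x : ℝ) : 0 ≤ stdPdf x := by
  unfold stdPdf; positivity

lemma stdPdf_measurable : Measurable stdPdf := by
  rw [← gaussianPDFReal01]; exact measurable_gaussianPDFReal 0 1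

lemma gauss_eq_withDensity :
    gaussianReal 0 1 = volume.withDensity (fun x => ((stdPdf x).toNNReal : ℝ≥0∞)) := by
  rw [gaussianReal_of_var_ne_zero 0 one_ne_zero]
  congr 1
  funext x
  rw [gaussianPDF, gaussianPDFReal01, ENNReal.ofReal]

lemma integral_gauss01 (g : ℝ → ℝ) :
    ∫ x, g x ∂(gaussianReal 0 1) = ∫ x, stdPdf x * g x := by
  rw [gauss_eq_withDensity,
    integral_withDensity_eq_integral_smul (stdPdf_measurable.real_toNNReal) g]
  congr 1
  funext x
  rw [NNReal.smul_def, smul_eq_mul, Real.coe_toNNReal _ (stdPdf_nonneg x)]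

lemma integrable_gauss01 (g : ℝ → ℝ) (h : Integrable (fun x => stdPdf x * g x)) :
    Integrable g (gaussianReal 0 1) := by
  rw [gauss_eq_withDensity,
    integrable_withDensity_iff_integrable_smul (stdPdf_measurable.real_toNNReal)]
  refine h.congr (Filter.Eventually.of_forall fun x => ?_)
  dsimp only
  rw [NNReal.smul_def, smul_eq_mul, Real.coe_toNNReal _ (stdPdf_nonneg x)]

lemma stdPdf_neg (x : ℝ) : stdPdf (-x) = stdPdf x := by simp [stdPdf]

lemma integrable_stdPdf_mul_id : Integrable (fun x => stdPdf x * x) := by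
  have h : (fun x => stdPdf x * x)
      = fun x => (Real.sqrt (2 * π))⁻¹ * (x * Real.exp (-(1/2) * x ^ 2)) := by
    funext x; unfold stdPdf; ring_nf
  rw [h]
  exact (integrable_mul_exp_neg_mul_sq (by norm_num : (0:ℝ) < 1/2)).const_mul _

lemma integrable_sq_exp : Integrable (fun x : ℝ => x ^ 2 * Real.exp (-(1/2) * x ^ 2)) := by
  have := integrable_rpow_mul_exp_neg_mul_sq (by norm_num : (0:ℝ) < 1/2)
    (by norm_num : (-1:ℝ) < ((2:ℕ):ℝ))
  simpa [Real.rpow_natCast] using this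

lemma integrable_stdPdf_mul_sq : Integrable (fun x => stdPdf x * (x * x)) := by
  have h : (fun x => stdPdf x * (x * x))
      = fun x => (Real.sqrt (2 * π))⁻¹ * (x ^ 2 * Real.exp (-(1/2) * x ^ 2)) := by
    funext x; unfold stdPdf; ring_nf
  rw [h]
  exact integrable_sq_exp.const_mul _

lemma gauss_m1 : ∫ x, x ∂(gaussianReal 0 1) = 0 := by
  rw [integral_gauss01]
  have h := integral_neg_eq_self (fun x => stdPdf x * x) (volume : Measure ℝ)
  have h2 : (∫ x, stdPdf (-x) * (-x)) = - ∫ x, stdPdf x * x := by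
    rw [← integral_neg]
    congr 1; funext x; rw [stdPdf_neg]; ring
  rw [h2] at h
  linarith

lemma gauss_m2 : ∫ x, x * x ∂(gaussianReal 0 1) = 1 := by
  rw [integral_gauss01]
  have h : (fun x => stdPdf x * (x * x))
      = fun x => (Real.sqrt (2 * π))⁻¹ * (|x| ^ 2 * Real.exp (-(1/2) * |x| ^ 2)) := by
    funext x; unfold stdPdf; rw [sq_abs]; ring_nf
  rw [h, integral_const_mul, integral_comp_abs (f := fun x => x ^ 2 * Real.exp (-(1/2) * x ^ 2))]
  have key := integral_rpow_mul_exp_neg_mul_rpow (p := 2) (q := 2) (b := 1/2)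
    (by norm_num) (by norm_num) (by norm_num)
  rw [show ((2:ℝ)) = ((2:ℕ):ℝ) by norm_num] at key
  simp_rw [Real.rpow_natCast] at key
  rw [show (-((((2:ℕ):ℝ)) + 1) / ((2:ℕ):ℝ)) = -(3/2) by norm_num,
    show (((((2:ℕ):ℝ)) + 1) / ((2:ℕ):ℝ)) = 1/2 + 1 by norm_num,
    Real.Gamma_add_one (by norm_num), Real.Gamma_one_half_eq] at key
  rw [show ((2:ℕ):ℝ) = (2:ℝ) by norm_num] at key
  rw [key]
  have h2 : ((1:ℝ)/2) ^ (-(3/2) : ℝ) = 2 * Real.sqrt 2 := by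
    rw [one_div, ← Real.rpow_neg_one (2:ℝ), ← Real.rpow_mul (by norm_num)]
    rw [show ((-1:ℝ) * -(3/2)) = 1 + 1/2 by norm_num, Real.rpow_add (by norm_num),
      Real.rpow_one, ← Real.sqrt_eq_rpow]
  rw [h2, Real.sqrt_mul (by norm_num)]
  have hs2 : Real.sqrt 2 ≠ 0 := by positivity
  have hsp : Real.sqrt π ≠ 0 := by positivity
  field_simp

lemma integrable_gauss_id : Integrable (fun x : ℝ => x) (gaussianReal 0 1) :=
  integrable_gauss01 _ integrable_stdPdf_mul_id

lemma integrable_gauss_sq : Integrable (fun x : ℝ => x * x) (gaussianReal 0 1) :=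
  integrable_gauss01 _ integrable_stdPdf_mul_sq

section Pi

variable {d : ℕ}

noncomputable def stdGaussPi (d : ℕ) : Measure (Fin d → ℝ) :=
  Measure.pi fun _ : Fin d => gaussianReal 0 1

noncomputable def coordF (j k : Fin d) : Fin d → ℝ → ℝ :=
  fun i x => (if i = j then x else 1) * (if i = k then x else 1)

lemma coordF_prod (j k : Fin d) (z : Fin d → ℝ) :
    z j * z k = ∏ i, coordF j k i (z i) := by
  unfold coordF
  rw [Finset.prod_mul_distrib, Finset.prod_ite_eq' Finset.univ j (fun i => z i),
    Finset.prod_ite_eq' Finset.univ k (fun i => z i)]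
  simp

lemma pi_mul_integral (j k : Fin d) :
    ∫ z : Fin d → ℝ, z j * z k ∂(stdGaussPi d) = if j = k then 1 else 0 := by
  letI : MeasureSpace ℝ := ⟨gaussianReal 0 1⟩
  haveI : IsProbabilityMeasure (volume : Measure ℝ) := by
    change IsProbabilityMeasure (gaussianReal 0 1); infer_instance
  haveI : SigmaFinite (volume : Measure ℝ) := by
    change SigmaFinite (gaussianReal 0 1); infer_instance
  have hvol : (volume : Measure (Fin d → ℝ)) = stdGaussPi d := rfl
  rw [← hvol]
  simp_rw [coordF_prod j k]
  rw [show (volume : Measure (Fin d → ℝ)) = Measure.pi fun _ => volume from rfl,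
    MeasureTheory.integral_fintype_prod_eq_prod (coordF j k)]
  by_cases hjk : j = k
  · subst hjk
    rw [if_pos rfl]
    have h1 : ∀ i : Fin d, (∫ x, coordF j j i x) = 1 := by
      intro i
      by_cases hi : i = j
      · subst hi
        simp only [coordF, if_pos rfl]
        exact gauss_m2
      · simp only [coordF, if_neg hi, mul_one]
        simp
    rw [Finset.prod_congr rfl (fun i _ => h1 i), Finset.prod_const_one]
  · rw [if_neg hjk]
    refine Finset.prod_eq_zero (Finset.mem_univ j) ?_
    simp only [coordF, if_pos rfl, if_neg hjk, mul_one]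
    exact gauss_m1

lemma pi_mul_integrable (j k : Fin d) :
    Integrable (fun z : Fin d → ℝ => z j * z k) (stdGaussPi d) := by
  letI : MeasureSpace ℝ := ⟨gaussianReal 0 1⟩
  haveI : IsProbabilityMeasure (volume : Measure ℝ) := by
    change IsProbabilityMeasure (gaussianReal 0 1); infer_instance
  haveI : SigmaFinite (volume : Measure ℝ) := by
    change SigmaFinite (gaussianReal 0 1); infer_instance
  have hvol : (volume : Measure (Fin d → ℝ)) = stdGaussPi d := rfl
  rw [← hvol]
  simp_rw [coordF_prod j k]
  refine MeasureTheory.Integrable.fintype_prod (f := coordF j k) fun i => ?_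
  by_cases hij : i = j
  · subst hij
    by_cases hik : i = k
    · subst hik
      have h : coordF i i i = fun x => x * x := by funext x; simp [coordF]
      rw [h]; exact integrable_gauss_sq
    · have h : coordF i k i = fun x => x := by funext x; simp [coordF, hik]
      rw [h]; exact integrable_gauss_id
  · by_cases hik : i = k
    · subst hik
      have h : coordF j i i = fun x => x := by funext x; simp [coordF, hij]
      rw [h]; exact integrable_gauss_id
    · have h : coordF j k i = fun x => 1 := by funext x; simp [coordF, hij, hik]
      rw [h]; exact integrable_const 1
end Pi

section MulVec

variable {d : ℕ}

lemma euclNorm_sq (x : Fin d → ℝ) : euclNorm x ^ 2 = ∑ i, x i ^ 2 :=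
  Real.sq_sqrt (Finset.sum_nonneg fun i _ => sq_nonneg _)

lemma sq_lin_expand (a : Fin d → ℝ) (z : Fin d → ℝ) :
    (∑ j, a j * z j) ^ 2 = ∑ j, ∑ k, (a j * a k) * (z j * z k) := by
  rw [sq, Finset.sum_mul_sum]
  refine Finset.sum_congr rfl fun j _ => Finset.sum_congr rfl fun k _ => by ring

lemma integrable_sq_lin (a : Fin d → ℝ) :
    Integrable (fun z : Fin d → ℝ => (∑ j, a j * z j) ^ 2) (stdGaussPi d) := by
  simp_rw [sq_lin_expand a]
  exact integrable_finset_sum _ fun j _ => integrable_finset_sum _ fun k _ =>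
    (pi_mul_integrable j k).const_mul _

lemma integral_sq_lin (a : Fin d → ℝ) :
    ∫ z : Fin d → ℝ, (∑ j, a j * z j) ^ 2 ∂(stdGaussPi d) = ∑ j, a j ^ 2 := by
  simp_rw [sq_lin_expand a]
  rw [integral_finset_sum _ fun j _ => integrable_finset_sum _ fun k _ =>
    (pi_mul_integrable j k).const_mul _]
  have h : ∀ j : Fin d, (∫ z : Fin d → ℝ, ∑ k, (a j * a k) * (z j * z k) ∂(stdGaussPi d))
      = a j ^ 2 := by
    intro j
    rw [integral_finset_sum _ fun k _ => (pi_mul_integrable j k).const_mul _]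
    have h2 : ∀ k : Fin d, (∫ z : Fin d → ℝ, (a j * a k) * (z j * z k) ∂(stdGaussPi d))
        = if j = k then a j * a k else 0 := by
      intro k
      rw [integral_const_mul, pi_mul_integral j k]
      by_cases hjk : j = k <;> simp [hjk]
    rw [Finset.sum_congr rfl fun k _ => h2 k, Finset.sum_ite_eq]
    simp [sq]
  rw [Finset.sum_congr rfl fun j _ => h j]

lemma integral_sq_mulVec (M : Matrix (Fin d) (Fin d) ℝ) :
    ∫ z : Fin d → ℝ, euclNorm (M.mulVec z) ^ 2 ∂(stdGaussPi d)
      = ∑ i, ∑ j, (M i j) ^ 2 := by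
  have h1 : ∀ z : Fin d → ℝ, euclNorm (M.mulVec z) ^ 2 = ∑ i, (∑ j, M i j * z j) ^ 2 := by
    intro z
    rw [euclNorm_sq]
    refine Finset.sum_congr rfl fun i _ => ?_
    congr 1
  simp_rw [h1]
  rw [integral_finset_sum _ fun i _ => integrable_sq_lin (M i)]
  exact Finset.sum_congr rfl fun i _ => integral_sq_lin (M i)

end MulVec

/-- For centered Gaussians with covariances `A`, `B`:
`W₂(N(0,A), N(0,B)) ≤ ‖A^{1/2} − B^{1/2}‖_F`. -/
theorem gaussian_W2_bound {d : ℕ} (A B : Matrix (Fin d) (Fin d) ℝ)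
    (hA : A.PosSemidef) (hB : B.PosSemidef) :
    W2 (gaussianOf A hA) (gaussianOf B hB) ≤ frobNorm (hA.sqrt - hB.sqrt) := by
  classical
  set M := hA.sqrt - hB.sqrt with hM
  set f : (Fin d → ℝ) → (Fin d → ℝ) × (Fin d → ℝ) :=
    fun z => (hA.sqrt.mulVec z, hB.sqrt.mulVec z) with hf
  have hmA : Measurable fun z : Fin d → ℝ => hA.sqrt.mulVec z :=
    (continuous_const.matrix_mulVec continuous_id).measurable
  have hmB : Measurable fun z : Fin d → ℝ => hB.sqrt.mulVec z :=
    (continuous_const.matrix_mulVec continuous_id).measurable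
  have hfm : Measurable f := hmA.prodMk hmB
  have hcoup : IsCoupling ((stdGaussPi d).map f) (gaussianOf A hA) (gaussianOf B hB) := by
    constructor
    · rw [Measure.map_map measurable_fst hfm]; rfl
    · rw [Measure.map_map measurable_snd hfm]; rfl
  have hbdd : BddBelow (Set.range fun γ :
      {γ : Measure ((Fin d → ℝ) × (Fin d → ℝ)) //
        IsCoupling γ (gaussianOf A hA) (gaussianOf B hB)} =>
      Real.sqrt (∫ p, euclNorm (p.1 - p.2) ^ 2 ∂(γ.1))) := by
    refine ⟨0, ?_⟩
    rintro x ⟨γ', rfl⟩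
    exact Real.sqrt_nonneg _
  refine le_trans (ciInf_le hbdd ⟨(stdGaussPi d).map f, hcoup⟩) ?_
  have hcont : Continuous fun p : (Fin d → ℝ) × (Fin d → ℝ) => euclNorm (p.1 - p.2) ^ 2 := by
    have hE : Continuous fun x : Fin d → ℝ => euclNorm x := by
      unfold euclNorm
      exact Real.continuous_sqrt.comp (continuous_finset_sum _ fun i _ =>
        (continuous_apply i).pow 2)
    exact (hE.comp (continuous_fst.sub continuous_snd)).pow 2
  show Real.sqrt (∫ p, euclNorm (p.1 - p.2) ^ 2 ∂((stdGaussPi d).map f)) ≤ frobNorm M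
  rw [integral_map hfm.aemeasurable hcont.aestronglyMeasurable]
  have heq : ∀ z : Fin d → ℝ, euclNorm ((f z).1 - (f z).2) ^ 2 = euclNorm (M.mulVec z) ^ 2 := by
    intro z
    rw [hf, hM, Matrix.sub_mulVec]
  simp_rw [heq]
  rw [integral_sq_mulVec]
  unfold frobNorm
  exact le_rfl
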